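/- Let p ≥ 2 and let λ₁,…,λ_p be distinct real numbers. Let f : ℝ → ℂ be differentiable at each λ_i. For each i ∈ {1,…,p} define, for s near λ_i, g_i(s) = Σ_{j∈{1,…,p}\{i}} f(λ_j) / (∏_{k∈{1,…,p}\{i,j}} (λ_j − λ_k) · (λ_j − s)) + f(s) / ∏_{k∈{1,…,p}\{i}} (s − λ_k), so that g_i′(λ_i) is the divided difference Δ^{(p)}_{λ₁,…,λ_p,λ_i}(f) with the knot λ_i repeated. Then Σ_{i=1}^p g_i′(λ_i) = Σ_{i=1}^p f′(λ_i)/∏_{k∈{1,…,p}\{i}}(λ_i − λ_k); that is, Σ_{i=1}^p Δ^{(p)}_{λ₁,…,λ_p,λ_i}(f) = Δ^{(p−1)}_{λ₁,…,λ_p}(f′). -/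

import Mathlib

open Finset

/-- Sum of repeated-knot divided differences equals divided difference of `f'`:
if for each `i` the number `d i` is the derivative at `s = λ i` of
`s ↦ ∑_{j ≠ i} f (λ j)/(∏_{k∉{i,j}}(λ j - λ k) * (λ j - s)) + f s/∏_{k ≠ i}(s - λ k)`
(i.e. `d i = Δ^{(p)}_{λ₁,…,λ_p,λ_i}(f)`), then
`∑ i, d i = ∑ i, f'(λ i)/∏_{k ≠ i}(λ i - λ k) = Δ^{(p-1)}_{λ₁,…,λ_p}(f')`. -/
theorem stmt2 (p : ℕ) (hp : 2 ≤ p) (l : Fin p → ℝ) (hl : Function.Injective l)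
    (f : ℝ → ℂ) (hf : ∀ i, DifferentiableAt ℝ f (l i))
    (d : Fin p → ℂ)
    (hd : ∀ i : Fin p, HasDerivAt
      (fun s : ℝ =>
        (∑ j ∈ univ.erase i, f (l j) /
            (((∏ k ∈ (univ.erase i).erase j, (l j - l k)) * (l j - s) : ℝ) : ℂ))
          + f s / ((∏ k ∈ univ.erase i, (s - l k) : ℝ) : ℂ))
      (d i) (l i)) :
    ∑ i : Fin p, d i
      = ∑ i : Fin p, deriv f (l i) / ((∏ k ∈ univ.erase i, (l i - l k) : ℝ) : ℂ) := by
  set P : Fin p → ℝ := fun i => ∏ k ∈ univ.erase i, (l i - l k) with hPdef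
  have hsub : ∀ {i j : Fin p}, i ≠ j → l i - l j ≠ 0 := by
    intro i j hij
    exact sub_ne_zero_of_ne (fun h => hij (hl h))
  have hPne : ∀ i, P i ≠ 0 := by
    intro i
    refine Finset.prod_ne_zero_iff.2 (fun k hk => ?_)
    exact hsub (Ne.symm (Finset.mem_erase.1 hk).1)
  -- explicit formula for each d i
  have key : ∀ i : Fin p, d i =
      (∑ j ∈ univ.erase i, f (l j) / ((P j : ℂ) * ((l j : ℂ) - (l i : ℂ))))
      + (deriv f (l i) / (P i : ℂ)
        - f (l i) * ∑ k ∈ univ.erase i, ((P i : ℂ) * ((l i : ℂ) - (l k : ℂ)))⁻¹) := by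
    intro i
    refine (hd i).unique ?_
    have hA : HasDerivAt
        (fun s : ℝ => ∑ j ∈ univ.erase i, f (l j) /
            (((∏ k ∈ (univ.erase i).erase j, (l j - l k)) * (l j - s) : ℝ) : ℂ))
        (∑ j ∈ univ.erase i, f (l j) / ((P j : ℂ) * ((l j : ℂ) - (l i : ℂ)))) (l i) := by
      refine HasDerivAt.fun_sum (fun j hj => ?_)
      have hji : j ≠ i := (Finset.mem_erase.1 hj).1
      set C : ℝ := ∏ k ∈ (univ.erase i).erase j, (l j - l k) with hCdef
      have hCne : C ≠ 0 := by
        refine Finset.prod_ne_zero_iff.2 (fun k hk => ?_)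
        exact hsub (Ne.symm (Finset.mem_erase.1 hk).1)
      have hfac : P j = C * (l j - l i) := by
        have hi : i ∈ univ.erase j := Finset.mem_erase.2 ⟨hji.symm, Finset.mem_univ i⟩
        simp only [hPdef]
        rw [← Finset.mul_prod_erase _ _ hi, hCdef, Finset.erase_right_comm]
        ring
      have hdenR : HasDerivAt (fun s : ℝ => C * (l j - s)) (-C) (l i) := by
        simpa using ((hasDerivAt_id (l i)).const_sub (l j)).const_mul C
      have hden := hdenR.ofReal_comp
      have hne : ((C * (l j - l i) : ℝ) : ℂ) ≠ 0 := by
        exact_mod_cast mul_ne_zero hCne (hsub hji)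
      have hterm := (hasDerivAt_const (l i) (f (l j))).fun_div hden hne
      refine hterm.congr_deriv (Eq.symm ?_)
      have h1 : ((l j : ℂ) - l i) ≠ 0 := by
        exact_mod_cast (hsub hji)
      have h2 : (C : ℂ) ≠ 0 := by exact_mod_cast hCne
      rw [hfac]
      push_cast
      field_simp
      ring
    have hB : HasDerivAt (fun s : ℝ => f s / ((∏ k ∈ univ.erase i, (s - l k) : ℝ) : ℂ))
        (deriv f (l i) / (P i : ℂ)
          - f (l i) * ∑ k ∈ univ.erase i, ((P i : ℂ) * ((l i : ℂ) - (l k : ℂ)))⁻¹) (l i) := by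
      set Q : ℝ := ∑ k ∈ univ.erase i, ∏ m ∈ (univ.erase i).erase k, (l i - l m) with hQdef
      have hdenR : HasDerivAt (fun s : ℝ => ∏ k ∈ univ.erase i, (s - l k)) Q (l i) := by
        have := HasDerivAt.fun_finsetProd (x := l i) (u := univ.erase i)
          (f := fun k s => s - l k) (f' := fun _ => 1)
          (fun k _ => (hasDerivAt_id (l i)).sub_const (l k))
        simpa [hQdef] using this
      have hden := hdenR.ofReal_comp
      have hPneC : ((∏ k ∈ univ.erase i, (l i - l k) : ℝ) : ℂ) ≠ 0 := by
        exact_mod_cast hPne i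
      have hdiv := ((hf i).hasDerivAt).fun_div hden hPneC
      refine hdiv.congr_deriv (Eq.symm ?_)
      have hQsum : (Q : ℂ) / (P i : ℂ) ^ 2
          = ∑ k ∈ univ.erase i, ((P i : ℂ) * ((l i : ℂ) - (l k : ℂ)))⁻¹ := by
        rw [hQdef]
        push_cast
        rw [Finset.sum_div]
        refine Finset.sum_congr rfl (fun k hk => ?_)
        have hfac : P i = (l i - l k) * ∏ m ∈ (univ.erase i).erase k, (l i - l m) :=
          (Finset.mul_prod_erase _ _ hk).symm
        have hki : i ≠ k := fun h => (Finset.mem_erase.1 hk).1 h.symm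
        have h1 : ((l i : ℂ) - l k) ≠ 0 := by exact_mod_cast hsub hki
        have h2 : ((∏ m ∈ (univ.erase i).erase k, (l i - l m) : ℝ) : ℂ) ≠ 0 := by
          refine Complex.ofReal_ne_zero.2 (Finset.prod_ne_zero_iff.2 (fun m hm => ?_))
          exact hsub (Ne.symm (Finset.mem_erase.1 (Finset.mem_of_mem_erase hm)).1)
        rw [hfac, Complex.ofReal_mul, Complex.ofReal_sub]
        rw [inv_eq_one_div, div_eq_div_iff (pow_ne_zero 2 (mul_ne_zero h1 h2))
          (mul_ne_zero (mul_ne_zero h1 h2) h1)]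
        push_cast
        ring
      have hPC : ((P i : ℝ) : ℂ) ≠ 0 := Complex.ofReal_ne_zero.2 (hPne i)
      have hrw : (∏ k ∈ univ.erase i, (l i - l k)) = P i := rfl
      rw [hrw, ← hQsum]
      field_simp
    exact hA.add hB
  -- sum the formula
  have swap : ∀ (g : Fin p → Fin p → ℂ),
      ∑ i : Fin p, ∑ j ∈ univ.erase i, g i j = ∑ j : Fin p, ∑ i ∈ univ.erase j, g i j := by
    intro g
    simp_rw [Finset.sum_erase_eq_sub (Finset.mem_univ _), Finset.sum_sub_distrib]
    rw [Finset.sum_comm]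
  have hAC : ∑ i : Fin p, ∑ j ∈ univ.erase i, f (l j) / ((P j : ℂ) * ((l j : ℂ) - (l i : ℂ)))
      = ∑ i : Fin p, f (l i) * ∑ k ∈ univ.erase i, ((P i : ℂ) * ((l i : ℂ) - (l k : ℂ)))⁻¹ := by
    rw [swap]
    refine Finset.sum_congr rfl (fun j _ => ?_)
    rw [Finset.mul_sum]
    refine Finset.sum_congr rfl (fun i _ => ?_)
    rw [div_eq_mul_inv]
  calc ∑ i : Fin p, d i
      = ∑ i : Fin p, ((∑ j ∈ univ.erase i, f (l j) / ((P j : ℂ) * ((l j : ℂ) - (l i : ℂ))))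
        + (deriv f (l i) / (P i : ℂ)
          - f (l i) * ∑ k ∈ univ.erase i, ((P i : ℂ) * ((l i : ℂ) - (l k : ℂ)))⁻¹)) :=
        Finset.sum_congr rfl (fun i _ => key i)
    _ = ∑ i : Fin p, deriv f (l i) / ((P i : ℝ) : ℂ) := by
        rw [Finset.sum_add_distrib, Finset.sum_sub_distrib, hAC]
        ring
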